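/- Let p = 1 (cubic case), A(u) = u² - u⁴, and for 0 < 𝔭 < 𝔭₊ with β = -A(𝔭₊) define T₊(𝔭,𝔮) = ∫_𝔭^{𝔭₊} du/√(β + A(u)) where 𝔮² = β + A(𝔭). Then for every fixed 𝔭 ∈ (0, 1/√2], the map 𝔮 ↦ T₊(𝔭,𝔮) is strictly monotonically decreasing on (0,∞). -/

import Mathlib

open MeasureTheory Set

noncomputable def Gfun (a M N : ℝ) (σ : ℝ) : ℝ :=
  M / (2 * Real.sqrt ((a + M * σ) * ((M * (1 - σ)) * (N + M * σ))))

lemma Gfun_pos {a M N : ℝ} (ha : 0 < a) (hM : 0 < M) (hN : 0 < N) {σ : ℝ}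
    (hσ : σ ∈ Ioo (0:ℝ) 1) : 0 < Gfun a M N σ := by
  obtain ⟨h0, h1⟩ := hσ
  have h1' : (0:ℝ) < 1 - σ := by linarith
  have : 0 < (a + M * σ) * ((M * (1 - σ)) * (N + M * σ)) := by positivity
  unfold Gfun
  positivity

lemma subst_eq (p pp q : ℝ) (hp0 : 0 < p) (hpp : p < pp) (hq : 0 < q)
    (hroot : q ^ 2 - (p ^ 2 - p ^ 4) + (pp ^ 2 - pp ^ 4) = 0) :
    (∫ u in p..pp, 1 / Real.sqrt (q ^ 2 - (p ^ 2 - p ^ 4) + (u ^ 2 - u ^ 4)))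
      = ∫ σ in Ioo (0:ℝ) 1, Gfun (p ^ 2) (pp ^ 2 - p ^ 2) (p ^ 2 + pp ^ 2 - 1) σ := by
  set M := pp ^ 2 - p ^ 2 with hMdef
  set N := p ^ 2 + pp ^ 2 - 1 with hNdef
  have hppos : 0 < pp := lt_trans hp0 hpp
  have hM : 0 < M := by nlinarith
  have hqMN : q ^ 2 = M * N := by rw [hMdef, hNdef]; nlinarith [hroot]
  have hN : 0 < N := by
    have h1 : 0 < M * N := by rw [← hqMN]; positivity
    nlinarith [h1]
  set φ : ℝ → ℝ := fun σ => Real.sqrt (p ^ 2 + M * σ) with hφdef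
  set φ' : ℝ → ℝ := fun σ => M / (2 * Real.sqrt (p ^ 2 + M * σ)) with hφ'def
  have hargpos : ∀ σ ∈ Ioo (0:ℝ) 1, 0 < p ^ 2 + M * σ := by
    intro σ hσ
    nlinarith [hσ.1, hσ.2]
  have hderiv : ∀ σ ∈ Ioo (0:ℝ) 1, HasDerivWithinAt φ (φ' σ) (Ioo (0:ℝ) 1) σ := by
    intro σ hσ
    have h0 : p ^ 2 + M * σ ≠ 0 := (hargpos σ hσ).ne'
    have h1 : HasDerivAt (fun σ : ℝ => p ^ 2 + M * σ) M σ := by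
      simpa using (hasDerivAt_id σ).const_mul M |>.const_add (p ^ 2)
    have h2 : HasDerivAt φ (1 / (2 * Real.sqrt (p ^ 2 + M * σ)) * M) σ :=
      (Real.hasDerivAt_sqrt h0).comp σ h1
    have : HasDerivAt φ (φ' σ) σ := by
      convert h2 using 1
      show M / (2 * Real.sqrt (p ^ 2 + M * σ)) = _
      ring
    exact this.hasDerivWithinAt
  have hinj : InjOn φ (Ioo (0:ℝ) 1) := by
    intro x hx y hy hxy
    have hx' := (hargpos x hx).le
    have hy' := (hargpos y hy).le
    have : p ^ 2 + M * x = p ^ 2 + M * y := by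
      have := congrArg (fun t => t ^ 2) hxy
      simpa [hφdef, Real.sq_sqrt hx', Real.sq_sqrt hy'] using this
    have := mul_left_cancel₀ hM.ne' (by linarith : M * x = M * y)
    exact this
  have himg : φ '' Ioo (0:ℝ) 1 = Ioo p pp := by
    ext u
    constructor
    · rintro ⟨σ, hσ, rfl⟩
      constructor
      · have : p = Real.sqrt (p ^ 2) := (Real.sqrt_sq hp0.le).symm
        rw [this]
        exact Real.sqrt_lt_sqrt (sq_nonneg p) (by nlinarith [hσ.1])
      · have : pp = Real.sqrt (pp ^ 2) := (Real.sqrt_sq hppos.le).symm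
        rw [this]
        exact Real.sqrt_lt_sqrt (hargpos σ hσ).le (by nlinarith [hσ.2])
    · rintro ⟨hu1, hu2⟩
      refine ⟨(u ^ 2 - p ^ 2) / M, ⟨?_, ?_⟩, ?_⟩
      · have : p ^ 2 < u ^ 2 := by nlinarith
        exact div_pos (by linarith) hM
      · rw [div_lt_one hM]
        nlinarith
      · have hu0 : 0 ≤ u := le_of_lt (lt_trans hp0 hu1)
        have : p ^ 2 + M * ((u ^ 2 - p ^ 2) / M) = u ^ 2 := by
          field_simp
          ring
        simp only [hφdef, this, Real.sqrt_sq hu0]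
  rw [intervalIntegral.integral_of_le hpp.le, integral_Ioc_eq_integral_Ioo, ← himg,
    integral_image_eq_integral_abs_deriv_smul measurableSet_Ioo hderiv hinj]
  apply setIntegral_congr_fun measurableSet_Ioo
  intro σ hσ
  have harg := hargpos σ hσ
  have h1σ : (0:ℝ) < 1 - σ := by linarith [hσ.2]
  have hsq : φ σ ^ 2 = p ^ 2 + M * σ := Real.sq_sqrt harg.le
  have hval : q ^ 2 - (p ^ 2 - p ^ 4) + (φ σ ^ 2 - φ σ ^ 4) = (M * (1 - σ)) * (N + M * σ) := by
    have h4 : φ σ ^ 4 = (p ^ 2 + M * σ) ^ 2 := by rw [← hsq]; ring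
    rw [hsq, h4, hMdef, hNdef]
    linear_combination hroot
  have hNM : 0 < N + M * σ := by nlinarith [hσ.1]
  have hfactor : 0 < (M * (1 - σ)) * (N + M * σ) := mul_pos (mul_pos hM h1σ) hNM
  have s1 : 0 < Real.sqrt (p ^ 2 + M * σ) := Real.sqrt_pos.mpr harg
  have s2 : 0 < Real.sqrt ((M * (1 - σ)) * (N + M * σ)) := Real.sqrt_pos.mpr hfactor
  simp only [smul_eq_mul, hval, Gfun]
  rw [abs_of_pos (by exact div_pos hM (by linarith) : 0 < φ' σ)]
  rw [Real.sqrt_mul harg.le, hφ'def]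
  rw [div_mul_div_comm, mul_one, mul_assoc]

lemma Gfun_integrable {a M N : ℝ} (ha : 0 < a) (hM : 0 < M) (hN : 0 < N) :
    IntegrableOn (Gfun a M N) (Ioo (0:ℝ) 1) := by
  set C : ℝ := M / (2 * Real.sqrt (a * M * N)) with hCdef
  have hC : 0 < C := by
    have : 0 < Real.sqrt (a * M * N) := Real.sqrt_pos.mpr (by positivity)
    rw [hCdef]; positivity
  have hmaj : IntegrableOn (fun σ : ℝ => C * (1 - σ) ^ (-(1/2) : ℝ)) (Ioo (0:ℝ) 1) := by
    have h1 : IntervalIntegrable (fun x : ℝ => x ^ (-(1/2) : ℝ)) volume 0 1 :=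
      intervalIntegral.intervalIntegrable_rpow' (by norm_num)
    have h2 := ((h1.comp_sub_left 1).const_mul C).symm
    norm_num at h2
    rw [intervalIntegrable_iff_integrableOn_Ioo_of_le (by norm_num)] at h2
    exact h2
  apply hmaj.integrable.mono
  · apply Measurable.aestronglyMeasurable
    unfold Gfun
    fun_prop
  · rw [ae_restrict_iff' measurableSet_Ioo]
    refine ae_of_all _ fun σ hσ => ?_
    obtain ⟨h0, h1⟩ := hσ
    have h1' : (0:ℝ) < 1 - σ := by linarith
    have hZ : 0 < (a + M * σ) * ((M * (1 - σ)) * (N + M * σ)) := by positivity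
    have hZle : a * M * N * (1 - σ) ≤ (a + M * σ) * ((M * (1 - σ)) * (N + M * σ)) := by
      have e : (a + M * σ) * ((M * (1 - σ)) * (N + M * σ)) - a * M * N * (1 - σ)
          = (M * (1 - σ)) * (a * (M * σ)) + (M * (1 - σ)) * ((M * σ) * N)
            + (M * (1 - σ)) * ((M * σ) * (M * σ)) := by ring
      have p1 : 0 < (M * (1 - σ)) * (a * (M * σ)) :=
        mul_pos (mul_pos hM h1') (mul_pos ha (mul_pos hM h0))
      have p2 : 0 < (M * (1 - σ)) * ((M * σ) * N) :=
        mul_pos (mul_pos hM h1') (mul_pos (mul_pos hM h0) hN)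
      have p3 : 0 < (M * (1 - σ)) * ((M * σ) * (M * σ)) :=
        mul_pos (mul_pos hM h1') (mul_pos (mul_pos hM h0) (mul_pos hM h0))
      linarith
    have hs0 : 0 < Real.sqrt (a * M * N * (1 - σ)) := Real.sqrt_pos.mpr (by positivity)
    have hG : Gfun a M N σ ≤ C * (1 - σ) ^ (-(1/2) : ℝ) := by
      have step1 : Gfun a M N σ ≤ M / (2 * Real.sqrt (a * M * N * (1 - σ))) := by
        unfold Gfun
        apply div_le_div_of_nonneg_left hM.le (by linarith)
        have := Real.sqrt_le_sqrt hZle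
        linarith
      have step2 : M / (2 * Real.sqrt (a * M * N * (1 - σ))) = C * (1 - σ) ^ (-(1/2) : ℝ) := by
        rw [Real.sqrt_mul (by positivity : (0:ℝ) ≤ a * M * N),
          Real.rpow_neg h1'.le, ← Real.sqrt_eq_rpow, hCdef]
        have s1 : 0 < Real.sqrt (a * M * N) := Real.sqrt_pos.mpr (by positivity)
        have s2 : 0 < Real.sqrt (1 - σ) := Real.sqrt_pos.mpr h1'
        field_simp
      linarith
    have hGnn : 0 ≤ Gfun a M N σ := by
      unfold Gfun; positivity
    have hRnn : 0 ≤ C * (1 - σ) ^ (-(1/2) : ℝ) := by positivity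
    simp only [Real.norm_eq_abs, abs_of_nonneg hGnn, abs_of_nonneg hRnn]
    exact hG

lemma Gfun_lt {a k M₁ M₂ : ℝ} (ha : 0 < a) (hk : 0 ≤ k) (hM₁ : 0 < M₁) (hlt : M₁ < M₂)
    (hN₁ : 0 < M₁ - k) {σ : ℝ} (hσ : σ ∈ Ioo (0:ℝ) 1) :
    Gfun a M₂ (M₂ - k) σ < Gfun a M₁ (M₁ - k) σ := by
  obtain ⟨h0, h1⟩ := hσ
  have h1' : (0:ℝ) < 1 - σ := by linarith
  have hM₂ : 0 < M₂ := lt_trans hM₁ hlt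
  have hN₂ : 0 < M₂ - k := by linarith
  set Z₁ : ℝ := (a + M₁ * σ) * ((M₁ * (1 - σ)) * ((M₁ - k) + M₁ * σ)) with hZ₁def
  set Z₂ : ℝ := (a + M₂ * σ) * ((M₂ * (1 - σ)) * ((M₂ - k) + M₂ * σ)) with hZ₂def
  have hZ₁ : 0 < Z₁ := by rw [hZ₁def]; positivity
  have hZ₂ : 0 < Z₂ := by rw [hZ₂def]; positivity
  have hs₁ : 0 < Real.sqrt Z₁ := Real.sqrt_pos.mpr hZ₁
  have hs₂ : 0 < Real.sqrt Z₂ := Real.sqrt_pos.mpr hZ₂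
  unfold Gfun
  rw [div_lt_div_iff₀ (by linarith) (by linarith)]
  have key : M₁ ^ 2 * Z₂ - M₂ ^ 2 * Z₁
      = M₁ * M₂ * (1 - σ) * ((M₂ - M₁) * (a * k + M₁ * M₂ * σ * (1 + σ))) := by
    rw [hZ₁def, hZ₂def]; ring
  have hpos : 0 < M₁ ^ 2 * Z₂ - M₂ ^ 2 * Z₁ := by
    rw [key]
    have h5 : 0 < a * k + M₁ * M₂ * σ * (1 + σ) := by
      nlinarith [mul_nonneg ha.le hk,
        mul_pos (mul_pos (mul_pos hM₁ hM₂) h0) (by linarith : (0:ℝ) < 1 + σ)]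
    exact mul_pos (mul_pos (mul_pos hM₁ hM₂) h1') (mul_pos (by linarith) h5)
  have hsq : (M₂ * (2 * Real.sqrt Z₁)) ^ 2 < (M₁ * (2 * Real.sqrt Z₂)) ^ 2 := by
    have e1 : (M₂ * (2 * Real.sqrt Z₁)) ^ 2 = 4 * (M₂ ^ 2 * Z₁) := by
      rw [mul_pow, mul_pow, Real.sq_sqrt hZ₁.le]; ring
    have e2 : (M₁ * (2 * Real.sqrt Z₂)) ^ 2 = 4 * (M₁ ^ 2 * Z₂) := by
      rw [mul_pow, mul_pow, Real.sq_sqrt hZ₂.le]; ring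
    rw [e1, e2]; linarith
  exact lt_of_pow_lt_pow_left₀ 2 (by positivity) hsq

/-- Monotonicity of the period function in the cubic case. With `A(u) = u² - u⁴`, fix
`𝔭 ∈ (0, 1/√2]`. For each `𝔮 > 0`, the turning point `𝔭₊` is the smallest root above
`𝔭` of `𝔮² - A(𝔭) + A(𝔭₊) = 0`, and the period function is
`T₊(𝔭,𝔮) = ∫_𝔭^{𝔭₊} du/√(𝔮² - A(𝔭) + A(u))`. Then `𝔮 ↦ T₊(𝔭,𝔮)` is strictly
decreasing on `(0,∞)`. -/
theorem period_function_strictly_decreasing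
    (A : ℝ → ℝ) (hA : ∀ u : ℝ, A u = u ^ 2 - u ^ 4)
    (p : ℝ) (hp0 : 0 < p) (hp : p ≤ 1 / Real.sqrt 2)
    (q₁ q₂ : ℝ) (hq₁ : 0 < q₁) (hq : q₁ < q₂)
    (pp₁ pp₂ : ℝ)
    (h₁ : p < pp₁ ∧ q₁ ^ 2 - A p + A pp₁ = 0 ∧
      ∀ s : ℝ, p < s → s < pp₁ → 0 < q₁ ^ 2 - A p + A s)
    (h₂ : p < pp₂ ∧ q₂ ^ 2 - A p + A pp₂ = 0 ∧
      ∀ s : ℝ, p < s → s < pp₂ → 0 < q₂ ^ 2 - A p + A s) :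
    (∫ u in p..pp₂, 1 / Real.sqrt (q₂ ^ 2 - A p + A u))
      < ∫ u in p..pp₁, 1 / Real.sqrt (q₁ ^ 2 - A p + A u) := by
  obtain ⟨hpp₁, hroot₁, -⟩ := h₁
  obtain ⟨hpp₂, hroot₂, -⟩ := h₂
  have hq₂ : 0 < q₂ := lt_trans hq₁ hq
  simp only [hA] at hroot₁ hroot₂ ⊢
  rw [subst_eq p pp₁ q₁ hp0 hpp₁ hq₁ hroot₁, subst_eq p pp₂ q₂ hp0 hpp₂ hq₂ hroot₂]
  have ha : 0 < p ^ 2 := by positivity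
  have hM₁ : 0 < pp₁ ^ 2 - p ^ 2 := by nlinarith
  have hM₂ : 0 < pp₂ ^ 2 - p ^ 2 := by nlinarith
  have hqMN₁ : q₁ ^ 2 = (pp₁ ^ 2 - p ^ 2) * (p ^ 2 + pp₁ ^ 2 - 1) := by nlinarith [hroot₁]
  have hqMN₂ : q₂ ^ 2 = (pp₂ ^ 2 - p ^ 2) * (p ^ 2 + pp₂ ^ 2 - 1) := by nlinarith [hroot₂]
  have hN₁ : 0 < p ^ 2 + pp₁ ^ 2 - 1 := by
    have h1 : 0 < (pp₁ ^ 2 - p ^ 2) * (p ^ 2 + pp₁ ^ 2 - 1) := by rw [← hqMN₁]; positivity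
    nlinarith [h1]
  have hN₂ : 0 < p ^ 2 + pp₂ ^ 2 - 1 := by
    have h1 : 0 < (pp₂ ^ 2 - p ^ 2) * (p ^ 2 + pp₂ ^ 2 - 1) := by rw [← hqMN₂]; positivity
    nlinarith [h1]
  have hs2 : 0 < Real.sqrt 2 := Real.sqrt_pos.mpr (by norm_num)
  have h2 : Real.sqrt 2 * Real.sqrt 2 = 2 := Real.mul_self_sqrt (by norm_num)
  have hp' : p * Real.sqrt 2 ≤ 1 := by
    rw [le_div_iff₀ hs2] at hp; exact hp
  have hk : 0 ≤ 1 - 2 * p ^ 2 := by nlinarith [mul_nonneg hp0.le hs2.le]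
  have hq2 : q₁ ^ 2 < q₂ ^ 2 := by nlinarith
  have hMlt : pp₁ ^ 2 - p ^ 2 < pp₂ ^ 2 - p ^ 2 := by
    by_contra hcon
    push_neg at hcon
    have hle : q₂ ^ 2 ≤ q₁ ^ 2 := by
      rw [hqMN₁, hqMN₂]
      exact mul_le_mul hcon (by nlinarith) hN₂.le hM₁.le
    linarith
  have hint₁ : IntegrableOn (Gfun (p ^ 2) (pp₁ ^ 2 - p ^ 2) (p ^ 2 + pp₁ ^ 2 - 1)) (Ioo (0:ℝ) 1) :=
    Gfun_integrable ha hM₁ hN₁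
  have hint₂ : IntegrableOn (Gfun (p ^ 2) (pp₂ ^ 2 - p ^ 2) (p ^ 2 + pp₂ ^ 2 - 1)) (Ioo (0:ℝ) 1) :=
    Gfun_integrable ha hM₂ hN₂
  have hptwise : ∀ σ ∈ Ioo (0:ℝ) 1,
      Gfun (p ^ 2) (pp₂ ^ 2 - p ^ 2) (p ^ 2 + pp₂ ^ 2 - 1) σ
        < Gfun (p ^ 2) (pp₁ ^ 2 - p ^ 2) (p ^ 2 + pp₁ ^ 2 - 1) σ := by
    intro σ hσ
    have e₁ : p ^ 2 + pp₁ ^ 2 - 1 = (pp₁ ^ 2 - p ^ 2) - (1 - 2 * p ^ 2) := by ring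
    have e₂ : p ^ 2 + pp₂ ^ 2 - 1 = (pp₂ ^ 2 - p ^ 2) - (1 - 2 * p ^ 2) := by ring
    rw [e₁, e₂]
    exact Gfun_lt ha hk hM₁ hMlt (by linarith) hσ
  have hsub : (∫ σ in Ioo (0:ℝ) 1,
        (Gfun (p ^ 2) (pp₁ ^ 2 - p ^ 2) (p ^ 2 + pp₁ ^ 2 - 1) σ
          - Gfun (p ^ 2) (pp₂ ^ 2 - p ^ 2) (p ^ 2 + pp₂ ^ 2 - 1) σ))
      = (∫ σ in Ioo (0:ℝ) 1, Gfun (p ^ 2) (pp₁ ^ 2 - p ^ 2) (p ^ 2 + pp₁ ^ 2 - 1) σ)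
        - ∫ σ in Ioo (0:ℝ) 1, Gfun (p ^ 2) (pp₂ ^ 2 - p ^ 2) (p ^ 2 + pp₂ ^ 2 - 1) σ :=
    integral_sub hint₁ hint₂
  have hpos : 0 < ∫ σ in Ioo (0:ℝ) 1,
      (Gfun (p ^ 2) (pp₁ ^ 2 - p ^ 2) (p ^ 2 + pp₁ ^ 2 - 1) σ
        - Gfun (p ^ 2) (pp₂ ^ 2 - p ^ 2) (p ^ 2 + pp₂ ^ 2 - 1) σ) := by
    rw [setIntegral_pos_iff_support_of_nonneg_ae]
    · have hsupp : Ioo (0:ℝ) 1 ⊆ (Function.support fun σ =>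
          Gfun (p ^ 2) (pp₁ ^ 2 - p ^ 2) (p ^ 2 + pp₁ ^ 2 - 1) σ
            - Gfun (p ^ 2) (pp₂ ^ 2 - p ^ 2) (p ^ 2 + pp₂ ^ 2 - 1) σ) ∩ Ioo 0 1 :=
        fun σ hσ => ⟨ne_of_gt (sub_pos.mpr (hptwise σ hσ)), hσ⟩
      refine lt_of_lt_of_le ?_ (measure_mono hsupp)
      simp [Real.volume_Ioo]
    · exact (ae_restrict_iff' measurableSet_Ioo).mpr
        (ae_of_all _ fun σ hσ => sub_nonneg.mpr (hptwise σ hσ).le)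
    · exact hint₁.sub hint₂
  linarith [hsub ▸ hpos]
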